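/- Let d ≥ 1, let (u_i)_{i=1}^d and (v_i)_{i=1}^d be orthonormal bases of ℝ^d, let σ_1 ≥ σ_2 ≥ ⋯ ≥ σ_d ≥ 0 be real numbers, set A = Σ_{i=1}^d σ_i u_i v_i^⊤, let 1 ≤ r ≤ d with σ_r > 0, and set A_r^† = Σ_{i=1}^r σ_i^{-1} v_i u_i^⊤. Let 1 ≤ r° ≤ d, let (u°_j)_{j=1}^{r°} and (v°_j)_{j=1}^{r°} be orthonormal families in ℝ^d, let σ°_1 ≥ σ°_2 ≥ ⋯ ≥ σ°_d ≥ 0 with σ°_j > 0 for j ≤ r° and σ°_j = 0 for j > r°, let b° ∈ ℝ^d, and set θ° = Σ_{j=1}^{r°} (σ°_j)^{-1} (u°_j ⬝ b°) v°_j. Assume the discrete Picard condition with exponent p > 1: |u°_j ⬝ b°| ≤ (σ°_j)^p for all 1 ≤ j ≤ r°. Let A° be a d×d real matrix with A° θ° = b°, let b ∈ ℝ^d, and set θ_r = A_r^† b. Then ‖θ_r − θ°‖₂ ≤ (1/σ_r) ‖b − b°‖₂ + (d − r) (σ°_r)^{p−1} + (d − r) r° (σ°_1)^{p−1} + (1/σ_r)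 ‖A° − A‖ ‖θ°‖₂, where ‖A° − A‖ denotes the operator norm of A° − A with respect to the Euclidean norm. -/

import Mathlib

open scoped RealInnerProductSpace BigOperators

section Aux
variable {d : ℕ}

lemma aux_norm_one {n : ℕ} {w : ℕ → EuclideanSpace ℝ (Fin d)}
    (hw : ∀ i ∈ Finset.Icc 1 n, ∀ j ∈ Finset.Icc 1 n,
      ⟪w i, w j⟫ = if i = j then 1 else 0)
    {i : ℕ} (hi : i ∈ Finset.Icc 1 n) : ‖w i‖ = 1 := by
  have h := hw i hi i hi
  rw [if_pos rfl, real_inner_self_eq_norm_sq] at h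
  rw [← Real.sqrt_sq (norm_nonneg (w i)), h, Real.sqrt_one]

lemma aux_norm_sq {n : ℕ} {w : ℕ → EuclideanSpace ℝ (Fin d)}
    (hw : ∀ i ∈ Finset.Icc 1 n, ∀ j ∈ Finset.Icc 1 n,
      ⟪w i, w j⟫ = if i = j then 1 else 0)
    (c : ℕ → ℝ) {s : Finset ℕ} (hs : s ⊆ Finset.Icc 1 n) :
    ‖∑ i ∈ s, c i • w i‖ ^ 2 = ∑ i ∈ s, (c i) ^ 2 := by
  classical
  calc ‖∑ i ∈ s, c i • w i‖ ^ 2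
      = ⟪∑ i ∈ s, c i • w i, ∑ j ∈ s, c j • w j⟫ :=
        (real_inner_self_eq_norm_sq _).symm
    _ = ∑ i ∈ s, ∑ j ∈ s, (c i * c j) * ⟪w i, w j⟫ := by
        rw [sum_inner]
        refine Finset.sum_congr rfl fun i _ => ?_
        rw [real_inner_smul_left, inner_sum, Finset.mul_sum]
        refine Finset.sum_congr rfl fun j _ => ?_
        rw [real_inner_smul_right]; ring
    _ = ∑ i ∈ s, (c i) ^ 2 := by
        refine Finset.sum_congr rfl fun i hi => ?_
        have h1 : ∀ j ∈ s, (c i * c j) * ⟪w i, w j⟫ = if j = i then (c i)^2 else 0 := by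
          intro j hj
          rw [hw i (hs hi) j (hs hj)]
          by_cases h : i = j
          · subst h; rw [if_pos rfl, if_pos rfl]; ring
          · rw [if_neg h, if_neg (Ne.symm h)]; ring
        rw [Finset.sum_congr rfl h1, Finset.sum_ite_eq' s i (fun _ => (c i)^2), if_pos hi]

lemma aux_bessel {n : ℕ} {w : ℕ → EuclideanSpace ℝ (Fin d)}
    (hw : ∀ i ∈ Finset.Icc 1 n, ∀ j ∈ Finset.Icc 1 n,
      ⟪w i, w j⟫ = if i = j then 1 else 0)
    {s : Finset ℕ} (hs : s ⊆ Finset.Icc 1 n) (x : EuclideanSpace ℝ (Fin d)) :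
    ∑ i ∈ s, ⟪w i, x⟫ ^ 2 ≤ ‖x‖ ^ 2 := by
  have h0 : (0:ℝ) ≤ ‖x - ∑ i ∈ s, ⟪w i, x⟫ • w i‖ ^ 2 := by positivity
  rw [norm_sub_sq_real, aux_norm_sq hw _ hs] at h0
  have h1 : ⟪x, ∑ i ∈ s, ⟪w i, x⟫ • w i⟫ = ∑ i ∈ s, ⟪w i, x⟫ ^ 2 := by
    rw [inner_sum]
    refine Finset.sum_congr rfl fun i _ => ?_
    rw [real_inner_smul_right, real_inner_comm]; ring
  rw [h1] at h0
  linarith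

lemma aux_var {σ : ℕ → ℝ} {u w : ℕ → EuclideanSpace ℝ (Fin d)} {r : ℕ}
    (hu : ∀ i ∈ Finset.Icc 1 d, ∀ j ∈ Finset.Icc 1 d,
      ⟪u i, u j⟫ = if i = j then 1 else 0)
    (hw : ∀ i ∈ Finset.Icc 1 d, ∀ j ∈ Finset.Icc 1 d,
      ⟪w i, w j⟫ = if i = j then 1 else 0)
    (hσmono : ∀ i j, 1 ≤ i → i ≤ j → j ≤ d → σ j ≤ σ i)
    (hrd : r ≤ d) (hσr : 0 < σ r)
    (x : EuclideanSpace ℝ (Fin d)) :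
    ‖∑ i ∈ Finset.Icc 1 r, ((σ i)⁻¹ * ⟪u i, x⟫) • w i‖ ≤ (σ r)⁻¹ * ‖x‖ := by
  have hsub : Finset.Icc 1 r ⊆ Finset.Icc 1 d := Finset.Icc_subset_Icc le_rfl hrd
  have hsq : ‖∑ i ∈ Finset.Icc 1 r, ((σ i)⁻¹ * ⟪u i, x⟫) • w i‖ ^ 2
      ≤ ((σ r)⁻¹ * ‖x‖) ^ 2 := by
    rw [aux_norm_sq hw _ hsub]
    have hterm : ∀ i ∈ Finset.Icc 1 r,
        ((σ i)⁻¹ * ⟪u i, x⟫) ^ 2 ≤ (σ r)⁻¹ ^ 2 * ⟪u i, x⟫ ^ 2 := by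
      intro i hi
      rw [Finset.mem_Icc] at hi
      have hσi : 0 < σ i := lt_of_lt_of_le hσr (hσmono i r hi.1 hi.2 hrd)
      have hinv : (σ i)⁻¹ ≤ (σ r)⁻¹ := by
        exact inv_anti₀ hσr (hσmono i r hi.1 hi.2 hrd)
      have := mul_le_mul_of_nonneg_right
        (mul_le_mul hinv hinv (le_of_lt (inv_pos.mpr hσi)) (le_of_lt (inv_pos.mpr hσr)))
        (sq_nonneg ⟪u i, x⟫)
      calc ((σ i)⁻¹ * ⟪u i, x⟫) ^ 2 = (σ i)⁻¹ * (σ i)⁻¹ * ⟪u i, x⟫ ^ 2 := by ring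
        _ ≤ (σ r)⁻¹ * (σ r)⁻¹ * ⟪u i, x⟫ ^ 2 := this
        _ = (σ r)⁻¹ ^ 2 * ⟪u i, x⟫ ^ 2 := by ring
    calc ∑ i ∈ Finset.Icc 1 r, ((σ i)⁻¹ * ⟪u i, x⟫) ^ 2
        ≤ ∑ i ∈ Finset.Icc 1 r, (σ r)⁻¹ ^ 2 * ⟪u i, x⟫ ^ 2 := Finset.sum_le_sum hterm
      _ = (σ r)⁻¹ ^ 2 * ∑ i ∈ Finset.Icc 1 r, ⟪u i, x⟫ ^ 2 := by rw [Finset.mul_sum]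
      _ ≤ (σ r)⁻¹ ^ 2 * ‖x‖ ^ 2 := by
          exact mul_le_mul_of_nonneg_left (aux_bessel hu hsub x) (by positivity)
      _ = ((σ r)⁻¹ * ‖x‖) ^ 2 := by ring
  have h := Real.sqrt_le_sqrt hsq
  rwa [Real.sqrt_sq (norm_nonneg _), Real.sqrt_sq (by positivity)] at h

end Aux

/-- Linear-algebraic core of the bias–variance trade-off theorem:
with `θ_r = A_r^† b` and `θ°` the minimum-norm solution of the rank-`r°` reference
system `A° θ° = b°` satisfying the discrete Picard condition with exponent `p > 1`,
`‖θ_r − θ°‖ ≤ (1/σ_r) ‖b − b°‖ + (d − r)(σ°_r)^{p−1} + (d − r) r° (σ°_1)^{p−1}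
  + (1/σ_r) ‖A° − A‖ ‖θ°‖`. -/
theorem stmt4 (d : ℕ) (hd : 1 ≤ d)
    (u v : ℕ → EuclideanSpace ℝ (Fin d))
    (hu : ∀ i ∈ Finset.Icc 1 d, ∀ j ∈ Finset.Icc 1 d,
      ⟪u i, u j⟫ = if i = j then 1 else 0)
    (hv : ∀ i ∈ Finset.Icc 1 d, ∀ j ∈ Finset.Icc 1 d,
      ⟪v i, v j⟫ = if i = j then 1 else 0)
    (σ : ℕ → ℝ)
    (hσmono : ∀ i j, 1 ≤ i → i ≤ j → j ≤ d → σ j ≤ σ i)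
    (hσnonneg : ∀ i, 1 ≤ i → i ≤ d → 0 ≤ σ i)
    (r : ℕ) (hr1 : 1 ≤ r) (hrd : r ≤ d) (hσr : 0 < σ r)
    (r' : ℕ) (hr'1 : 1 ≤ r') (hr'd : r' ≤ d)
    (u' v' : ℕ → EuclideanSpace ℝ (Fin d))
    (hu' : ∀ i ∈ Finset.Icc 1 r', ∀ j ∈ Finset.Icc 1 r',
      ⟪u' i, u' j⟫ = if i = j then 1 else 0)
    (hv' : ∀ i ∈ Finset.Icc 1 r', ∀ j ∈ Finset.Icc 1 r',
      ⟪v' i, v' j⟫ = if i = j then 1 else 0)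
    (σ' : ℕ → ℝ)
    (hσ'mono : ∀ i j, 1 ≤ i → i ≤ j → j ≤ d → σ' j ≤ σ' i)
    (hσ'pos : ∀ j, 1 ≤ j → j ≤ r' → 0 < σ' j)
    (hσ'zero : ∀ j, r' < j → j ≤ d → σ' j = 0)
    (b' : EuclideanSpace ℝ (Fin d))
    (θ' : EuclideanSpace ℝ (Fin d))
    (hθ' : θ' = ∑ j ∈ Finset.Icc 1 r', ((σ' j)⁻¹ * ⟪u' j, b'⟫) • v' j)
    (p : ℝ) (hp : 1 < p)
    (hPicard : ∀ j, 1 ≤ j → j ≤ r' → |⟪u' j, b'⟫| ≤ σ' j ^ p)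
    (A : EuclideanSpace ℝ (Fin d) →L[ℝ] EuclideanSpace ℝ (Fin d))
    (hA : ∀ x, A x = ∑ i ∈ Finset.Icc 1 d, (σ i * ⟪v i, x⟫) • u i)
    (A' : EuclideanSpace ℝ (Fin d) →L[ℝ] EuclideanSpace ℝ (Fin d))
    (hA'θ' : A' θ' = b')
    (b : EuclideanSpace ℝ (Fin d))
    (θr : EuclideanSpace ℝ (Fin d))
    (hθr : θr = ∑ i ∈ Finset.Icc 1 r, ((σ i)⁻¹ * ⟪u i, b⟫) • v i) :
    ‖θr - θ'‖ ≤ (1 / σ r) * ‖b - b'‖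
      + ((d : ℝ) - r) * σ' r ^ (p - 1)
      + ((d : ℝ) - r) * r' * σ' 1 ^ (p - 1)
      + (1 / σ r) * ‖A' - A‖ * ‖θ'‖ := by
  classical
  have hrsub : Finset.Icc 1 r ⊆ Finset.Icc 1 d := Finset.Icc_subset_Icc le_rfl hrd
  set F1 : EuclideanSpace ℝ (Fin d) :=
    ∑ i ∈ Finset.Icc 1 r, ((σ i)⁻¹ * ⟪u i, b - b'⟫) • v i with hF1
  set F3 : EuclideanSpace ℝ (Fin d) :=
    ∑ i ∈ Finset.Icc 1 r, ((σ i)⁻¹ * ⟪u i, b' - A θ'⟫) • v i with hF3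
  set FA : EuclideanSpace ℝ (Fin d) :=
    ∑ i ∈ Finset.Icc 1 r, ((σ i)⁻¹ * ⟪u i, A θ'⟫) • v i with hFA
  -- split θr
  have hsplit : θr = F1 + F3 + FA := by
    rw [hθr, hF1, hF3, hFA, ← Finset.sum_add_distrib, ← Finset.sum_add_distrib]
    refine Finset.sum_congr rfl fun i _ => ?_
    have hb : ⟪u i, b⟫ = ⟪u i, b - b'⟫ + ⟪u i, b' - A θ'⟫ + ⟪u i, A θ'⟫ := by
      rw [← inner_add_right, ← inner_add_right]
      congr 1
      abel
    rw [hb, mul_add, mul_add, add_smul, add_smul]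
  -- bound F1
  have hbF1 : ‖F1‖ ≤ (σ r)⁻¹ * ‖b - b'‖ :=
    aux_var hu hv hσmono hrd hσr _
  -- bound F3
  have hb'A : b' - A θ' = (A' - A) θ' := by
    rw [ContinuousLinearMap.sub_apply, hA'θ']
  have hbF3 : ‖F3‖ ≤ (σ r)⁻¹ * (‖A' - A‖ * ‖θ'‖) := by
    refine le_trans (aux_var hu hv hσmono hrd hσr _) ?_
    have := (A' - A).le_opNorm θ'
    rw [hb'A]
    exact mul_le_mul_of_nonneg_left ((A' - A).le_opNorm θ') (by positivity)
  -- FA = projection of θ'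
  have hFAeq : FA = ∑ i ∈ Finset.Icc 1 r, ⟪v i, θ'⟫ • v i := by
    rw [hFA]
    refine Finset.sum_congr rfl fun i hi => ?_
    have hiId : i ∈ Finset.Icc 1 d := hrsub hi
    have hinner : ⟪u i, A θ'⟫ = σ i * ⟪v i, θ'⟫ := by
      rw [hA θ', inner_sum]
      have hterm : ∀ j ∈ Finset.Icc 1 d,
          ⟪u i, (σ j * ⟪v j, θ'⟫) • u j⟫ = if j = i then σ i * ⟪v i, θ'⟫ else 0 := by
        intro j hj
        rw [real_inner_smul_right, hu i hiId j hj]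
        by_cases h : i = j
        · subst h; rw [if_pos rfl, if_pos rfl, mul_one]
        · rw [if_neg h, if_neg (Ne.symm h), mul_zero]
      rw [Finset.sum_congr rfl hterm,
        Finset.sum_ite_eq' (Finset.Icc 1 d) i (fun _ => σ i * ⟪v i, θ'⟫), if_pos hiId]
    rw [Finset.mem_Icc] at hi
    have hσi : 0 < σ i := lt_of_lt_of_le hσr (hσmono i r hi.1 hi.2 hrd)
    rw [hinner, ← mul_assoc, inv_mul_cancel₀ (ne_of_gt hσi), one_mul]
  -- basis expansion of θ'
  have hnonempty : Nonempty ↥(Finset.Icc 1 d) := ⟨⟨1, by simp [hd]⟩⟩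
  have hvo : Orthonormal ℝ (fun i : ↥(Finset.Icc 1 d) => v i) := by
    rw [orthonormal_iff_ite]
    intro i j
    rw [hv i i.2 j j.2]
    by_cases h : i = j
    · rw [if_pos h, if_pos (by rw [h])]
    · rw [if_neg h, if_neg (fun hc => h (Subtype.ext hc))]
  have hcard : Fintype.card ↥(Finset.Icc 1 d) = Module.finrank ℝ (EuclideanSpace ℝ (Fin d)) := by
    rw [Fintype.card_coe, Nat.card_Icc, finrank_euclideanSpace_fin]; omega
  let Bb : Module.Basis ↥(Finset.Icc 1 d) ℝ (EuclideanSpace ℝ (Fin d)) :=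
    basisOfLinearIndependentOfCardEqFinrank hvo.linearIndependent hcard
  have hBb : ⇑Bb = fun i : ↥(Finset.Icc 1 d) => v i :=
    coe_basisOfLinearIndependentOfCardEqFinrank _ _
  let B : OrthonormalBasis ↥(Finset.Icc 1 d) ℝ (EuclideanSpace ℝ (Fin d)) :=
    Bb.toOrthonormalBasis (by rw [hBb]; exact hvo)
  have hB : ∀ i : ↥(Finset.Icc 1 d), B i = v i := by
    intro i
    have := Bb.coe_toOrthonormalBasis (by rw [hBb]; exact hvo)
    rw [show B = Bb.toOrthonormalBasis (by rw [hBb]; exact hvo) from rfl, this, hBb]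
  have hexp : θ' = ∑ i ∈ Finset.Icc 1 d, ⟪v i, θ'⟫ • v i := by
    conv_lhs => rw [← B.sum_repr' θ']
    rw [← Finset.sum_coe_sort (Finset.Icc 1 d) (fun i => ⟪v i, θ'⟫ • v i)]
    exact Finset.sum_congr rfl fun i _ => by rw [hB]
  -- the bias term
  have hbias : FA - θ' = -∑ i ∈ Finset.Icc 1 d \ Finset.Icc 1 r, ⟪v i, θ'⟫ • v i := by
    have hsd := Finset.sum_sdiff (f := fun i => ⟪v i, θ'⟫ • v i) hrsub
    rw [hFAeq]
    nth_rewrite 2 [hexp]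
    rw [← hsd]
    abel
  -- coefficient bound
  have hσ'1pos : 0 < σ' 1 := hσ'pos 1 le_rfl hr'1
  have hcoef : ∀ i ∈ Finset.Icc 1 d, |⟪v i, θ'⟫| ≤ (r' : ℝ) * σ' 1 ^ (p - 1) := by
    intro i hiId
    rw [hθ', inner_sum]
    calc |∑ k ∈ Finset.Icc 1 r', ⟪v i, ((σ' k)⁻¹ * ⟪u' k, b'⟫) • v' k⟫|
        ≤ ∑ k ∈ Finset.Icc 1 r', |⟪v i, ((σ' k)⁻¹ * ⟪u' k, b'⟫) • v' k⟫| :=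
          Finset.abs_sum_le_sum_abs _ _
      _ ≤ ∑ k ∈ Finset.Icc 1 r', σ' 1 ^ (p - 1) := by
          refine Finset.sum_le_sum fun k hk => ?_
          rw [Finset.mem_Icc] at hk
          have hσ'k : 0 < σ' k := hσ'pos k hk.1 hk.2
          have hkd : k ≤ d := le_trans hk.2 hr'd
          have hvk1 : ‖v' k‖ = 1 := aux_norm_one hv' (Finset.mem_Icc.mpr hk)
          have hvi1 : ‖v i‖ = 1 := aux_norm_one hv hiId
          have hcs : |⟪v i, v' k⟫| ≤ 1 := by
            have := abs_real_inner_le_norm (v i) (v' k)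
            rwa [hvi1, hvk1, one_mul] at this
          rw [real_inner_smul_right, abs_mul, abs_mul, abs_inv,
            abs_of_pos hσ'k]
          have h1 : (σ' k)⁻¹ * |⟪u' k, b'⟫| ≤ σ' k ^ (p - 1) := by
            have := hPicard k hk.1 hk.2
            have h2 : (σ' k)⁻¹ * |⟪u' k, b'⟫| ≤ (σ' k)⁻¹ * σ' k ^ p :=
              mul_le_mul_of_nonneg_left this (le_of_lt (inv_pos.mpr hσ'k))
            rw [Real.rpow_sub hσ'k, Real.rpow_one, div_eq_inv_mul]
            exact h2
          have h3 : σ' k ^ (p - 1) ≤ σ' 1 ^ (p - 1) :=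
            Real.rpow_le_rpow (le_of_lt hσ'k) (hσ'mono 1 k le_rfl hk.1 hkd)
              (by linarith)
          calc (σ' k)⁻¹ * |⟪u' k, b'⟫| * |⟪v i, v' k⟫|
              ≤ (σ' k)⁻¹ * |⟪u' k, b'⟫| * 1 :=
                mul_le_mul_of_nonneg_left hcs (by positivity)
            _ = (σ' k)⁻¹ * |⟪u' k, b'⟫| := mul_one _
            _ ≤ σ' 1 ^ (p - 1) := le_trans h1 h3
      _ = (r' : ℝ) * σ' 1 ^ (p - 1) := by
          rw [Finset.sum_const, Nat.card_Icc, nsmul_eq_mul]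
          norm_num
  -- bound the bias norm
  have hcardsd : ((Finset.Icc 1 d \ Finset.Icc 1 r).card : ℝ) = (d : ℝ) - r := by
    rw [Finset.card_sdiff_of_subset hrsub, Nat.card_Icc, Nat.card_Icc]
    have : d + 1 - 1 - (r + 1 - 1) = d - r := by omega
    rw [this, Nat.cast_sub hrd]
  have hbFA : ‖FA - θ'‖ ≤ ((d : ℝ) - r) * ((r' : ℝ) * σ' 1 ^ (p - 1)) := by
    rw [hbias, norm_neg]
    calc ‖∑ i ∈ Finset.Icc 1 d \ Finset.Icc 1 r, ⟪v i, θ'⟫ • v i‖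
        ≤ ∑ i ∈ Finset.Icc 1 d \ Finset.Icc 1 r, ‖⟪v i, θ'⟫ • v i‖ :=
          norm_sum_le _ _
      _ ≤ ∑ i ∈ Finset.Icc 1 d \ Finset.Icc 1 r, (r' : ℝ) * σ' 1 ^ (p - 1) := by
          refine Finset.sum_le_sum fun i hi => ?_
          have hiId : i ∈ Finset.Icc 1 d := (Finset.mem_sdiff.mp hi).1
          rw [norm_smul, aux_norm_one hv hiId, mul_one]
          exact hcoef i hiId
      _ = ((d : ℝ) - r) * ((r' : ℝ) * σ' 1 ^ (p - 1)) := by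
          rw [Finset.sum_const, nsmul_eq_mul, hcardsd]
  -- nonneg extra term
  have hσ'r : 0 ≤ σ' r := by
    rcases le_or_gt r r' with h | h
    · exact le_of_lt (hσ'pos r hr1 h)
    · rw [hσ'zero r h hrd]
  have hextra : 0 ≤ ((d : ℝ) - r) * σ' r ^ (p - 1) := by
    have h1 : (0:ℝ) ≤ (d : ℝ) - r := by
      rw [sub_nonneg]
      exact_mod_cast hrd
    exact mul_nonneg h1 (Real.rpow_nonneg hσ'r _)
  -- assemble
  have htri : ‖θr - θ'‖ ≤ ‖F1‖ + ‖F3‖ + ‖FA - θ'‖ := by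
    have : θr - θ' = F1 + F3 + (FA - θ') := by rw [hsplit]; abel
    rw [this]
    exact norm_add₃_le
  rw [one_div]
  have hdr : ((d : ℝ) - r) * r' * σ' 1 ^ (p - 1) = ((d : ℝ) - r) * ((r' : ℝ) * σ' 1 ^ (p - 1)) := by
    ring
  rw [hdr]
  linarith [hbF1, hbF3, hbFA, htri]
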